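/- Let λ < 0 and let f : ℝ → ℝ be twice differentiable on (0,∞). Then f''(u) + f'(u)/u + λ f(u) = 0 for all u > 0 if and only if there exist constants c₁, c₂ ∈ ℝ such that f(u) = c₁ I₀(√(−λ) u) + c₂ K₀(√(−λ) u) for all u > 0. -/

import Mathlib

/-- The Bessel function of the first kind of order zero,
`J₀(x) = ∑ (−1)ⁿ x²ⁿ / (2²ⁿ (n!)²)`. -/
noncomputable def besselJ0 (x : ℝ) : ℝ :=
  ∑' n : ℕ, (-1 : ℝ) ^ n * x ^ (2 * n) / (2 ^ (2 * n) * ((n.factorial : ℝ)) ^ 2)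

/-- `φ(n) = ∑_{m=1}^n 1/m`, with `φ(0) = 0`. -/
noncomputable def harmonicPhi (n : ℕ) : ℝ :=
  ∑ m ∈ Finset.range n, (1 : ℝ) / (m + 1)

/-- Weber's Bessel function of order zero,
`Y₀(x) = (2/π)[(ln(x/2) + γ) J₀(x) − ∑ (−1)ⁿ φ(n) x²ⁿ / (2²ⁿ (n!)²)]`. -/
noncomputable def besselY0 (x : ℝ) : ℝ :=
  (2 / Real.pi) *
    ((Real.log (x / 2) + Real.eulerMascheroniConstant) * besselJ0 x -
      ∑' n : ℕ, (-1 : ℝ) ^ n * harmonicPhi n * x ^ (2 * n) /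
        (2 ^ (2 * n) * ((n.factorial : ℝ)) ^ 2))

/-- The modified Bessel function of the first kind of order zero,
`I₀(x) = ∑ x²ⁿ / (2²ⁿ (n!)²)`. -/
noncomputable def besselI0 (x : ℝ) : ℝ :=
  ∑' n : ℕ, x ^ (2 * n) / (2 ^ (2 * n) * ((n.factorial : ℝ)) ^ 2)

/-- The modified Bessel function of the second kind of order zero,
`K₀(x) = −(ln(x/2) + γ) I₀(x) + ∑ φ(n) x²ⁿ / (2²ⁿ (n!)²)`. -/
noncomputable def besselK0 (x : ℝ) : ℝ :=
  -(Real.log (x / 2) + Real.eulerMascheroniConstant) * besselI0 x +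
    ∑' n : ℕ, harmonicPhi n * x ^ (2 * n) / (2 ^ (2 * n) * ((n.factorial : ℝ)) ^ 2)


open Set Filter Metric

namespace BesselAux

noncomputable def c (n : ℕ) : ℝ := ((2:ℝ)^(2*n) * (n.factorial : ℝ)^2)⁻¹

lemma c_pos (n : ℕ) : 0 < c n := by
  have : (0:ℝ) < (n.factorial : ℝ) := by exact_mod_cast n.factorial_pos
  unfold c; positivity

lemma c_succ (n : ℕ) : c n = 4 * ((n:ℝ)+1)^2 * c (n+1) := by
  have h1 : (((n+1).factorial : ℝ)) = ((n:ℝ)+1) * (n.factorial : ℝ) := by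
    rw [Nat.factorial_succ]; push_cast; ring
  have hfac : (0:ℝ) < (n.factorial : ℝ) := by exact_mod_cast n.factorial_pos
  unfold c
  rw [h1, show 2*(n+1) = 2*n + 2 by ring, pow_add]
  field_simp
  ring

lemma summable_main (p : ℕ) (R : ℝ) :
    Summable (fun n : ℕ => ((n:ℝ)+1)^p * c n * R^(2*n)) := by
  apply summable_of_ratio_norm_eventually_le (r := 1/2) (by norm_num)
  have hev : ∀ᶠ n : ℕ in atTop, (2:ℝ)^p * R^2 ≤ ((n:ℝ)+1)^2 := by
    filter_upwards [eventually_ge_atTop (⌈(2:ℝ)^p * R^2⌉₊)] with n hn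
    have h0 : ((⌈(2:ℝ)^p * R^2⌉₊ : ℕ) : ℝ) ≤ (n:ℝ) := by exact_mod_cast hn
    have h1 : (2:ℝ)^p * R^2 ≤ (n:ℝ) := le_trans (Nat.le_ceil ((2:ℝ)^p * R^2)) h0
    nlinarith [sq_nonneg ((n:ℝ)+1), (Nat.cast_nonneg n : (0:ℝ) ≤ n)]
  filter_upwards [hev] with n hn
  have hnn : ∀ m : ℕ, (0:ℝ) ≤ ((m:ℝ)+1)^p * c m * R^(2*m) := fun m =>
    mul_nonneg (mul_nonneg (by positivity) (c_pos m).le) ((even_two_mul m).pow_nonneg R)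
  have hc := c_pos n
  have hcn : (0:ℝ) ≤ c n := le_of_lt hc
  have hR : (0:ℝ) ≤ R^(2*n) := (even_two_mul n).pow_nonneg R
  rw [Real.norm_eq_abs, Real.norm_eq_abs, abs_of_nonneg (hnn (n+1)), abs_of_nonneg (hnn n)]
  have hcs : c (n+1) = c n / (4 * ((n:ℝ)+1)^2) := by
    rw [c_succ n]; field_simp
  push_cast
  rw [hcs, show 2*(n+1) = 2*n + 2 by ring, pow_add]
  have key : ((n:ℝ)+1+1)^p ≤ (2:ℝ)^p * ((n:ℝ)+1)^p := by
    rw [← mul_pow]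
    apply pow_le_pow_left₀ (by positivity)
    nlinarith [(Nat.cast_nonneg n : (0:ℝ) ≤ n)]
  have hnp : (0:ℝ) ≤ ((n:ℝ)+1)^p := by positivity
  have k1 : ((n:ℝ)+1+1)^p * R^2 ≤ ((n:ℝ)+1)^p * ((n:ℝ)+1)^2 := by
    calc ((n:ℝ)+1+1)^p * R^2 ≤ (2^p * ((n:ℝ)+1)^p) * R^2 := by nlinarith [sq_nonneg R]
      _ = ((n:ℝ)+1)^p * (2^p * R^2) := by ring
      _ ≤ _ := by nlinarith
  have h4 : (0:ℝ) < 4*((n:ℝ)+1)^2 := by positivity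
  have heq : ((n:ℝ)+1+1)^p * (c n / (4*((n:ℝ)+1)^2)) * (R^(2*n) * R^2)
      = (((n:ℝ)+1+1)^p * c n * (R^(2*n) * R^2)) / (4*((n:ℝ)+1)^2) := by ring
  rw [heq, div_le_iff₀ h4]
  have hint := mul_le_mul_of_nonneg_right k1 (mul_nonneg hcn hR)
  have hpos : (0:ℝ) ≤ ((n:ℝ)+1)^p * ((n:ℝ)+1)^2 * (c n * R^(2*n)) :=
    mul_nonneg (mul_nonneg hnp (by positivity)) (mul_nonneg hcn hR)
  nlinarith [hint, hpos]

end BesselAux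
namespace BesselAux

noncomputable def T (b : ℕ → ℝ) (e : ℕ → ℕ) (x : ℝ) : ℝ := ∑' n, b n * x ^ e n

noncomputable def db (b : ℕ → ℝ) (e : ℕ → ℕ) : ℕ → ℝ := fun n => b n * (e n : ℝ)
def de (e : ℕ → ℕ) : ℕ → ℕ := fun n => e n - 1

def Good (b : ℕ → ℝ) (e : ℕ → ℕ) (C : ℝ) (p : ℕ) : Prop :=
  0 ≤ C ∧ (∀ n, |b n| ≤ C * ((n:ℝ)+1)^p * c n) ∧ (∀ n, e n ≤ 2*n+2)

lemma Good.deriv {b e C p} (h : Good b e C p) : Good (db b e) (de e) (2*C) (p+1) := by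
  obtain ⟨hC, hb, he⟩ := h
  refine ⟨by linarith, fun n => ?_, fun n => le_trans (Nat.sub_le _ _) (he n)⟩
  rw [db, abs_mul, Nat.abs_cast]
  have h1 : ((e n : ℝ)) ≤ 2*((n:ℝ)+1) := by exact_mod_cast Nat.cast_le.mpr (he n)
  calc |b n| * (e n : ℝ) ≤ (C * ((n:ℝ)+1)^p * c n) * (2*((n:ℝ)+1)) := by
        apply mul_le_mul (hb n) h1 (Nat.cast_nonneg _)
        have := c_pos n; positivity
    _ = 2*C * ((n:ℝ)+1)^(p+1) * c n := by ring

lemma Good.summable {b e C p} (h : Good b e C p) (x : ℝ) :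
    Summable (fun n => b n * x ^ e n) := by
  obtain ⟨hC, hb, he⟩ := h
  set R : ℝ := |x| + 1 with hR
  have hR1 : (1:ℝ) ≤ R := by rw [hR]; linarith [abs_nonneg x]
  apply Summable.of_norm_bounded
    (g := fun n : ℕ => (C * R^2) * (((n:ℝ)+1)^p * c n * R^(2*n)))
    ((summable_main p R).mul_left _)
  intro n
  have hc := c_pos n
  rw [norm_mul, Real.norm_eq_abs, Real.norm_eq_abs, abs_pow]
  have h1 : |x| ^ e n ≤ R ^ e n :=
    pow_le_pow_left₀ (abs_nonneg x) (by rw [hR]; linarith) _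
  have h2 : R ^ e n ≤ R ^ (2*n+2) := pow_le_pow_right₀ hR1 (he n)
  have h3 : R ^ (2*n+2) = R^(2*n) * R^2 := by rw [pow_add]
  calc |b n| * |x| ^ e n ≤ (C * ((n:ℝ)+1)^p * c n) * (R^(2*n) * R^2) := by
        apply mul_le_mul (hb n) (le_trans h1 (h2.trans_eq h3)) (by positivity)
        positivity
    _ = (C * R^2) * (((n:ℝ)+1)^p * c n * R^(2*n)) := by ring

lemma Good.hasDerivAt {b e C p} (h : Good b e C p) (x : ℝ) :
    HasDerivAt (T b e) (T (db b e) (de e) x) x := by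
  have hsum := h.summable x
  obtain ⟨hC, hb, he⟩ := h
  set R : ℝ := |x| + 1 with hR
  have hR1 : (1:ℝ) ≤ R := by rw [hR]; linarith [abs_nonneg x]
  have hxR : x ∈ Metric.ball (0:ℝ) R := by
    rw [Metric.mem_ball, dist_zero_right, Real.norm_eq_abs, hR]; linarith
  have hder : ∀ (n : ℕ) (y : ℝ), y ∈ Metric.ball (0:ℝ) R →
      HasDerivAt (fun z => b n * z ^ e n) (db b e n * y ^ de e n) y := by
    intro n y _
    simpa [db, de, mul_assoc] using (hasDerivAt_pow (e n) y).const_mul (b n)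
  have hbound : ∀ (n : ℕ) (y : ℝ), y ∈ Metric.ball (0:ℝ) R →
      ‖db b e n * y ^ de e n‖ ≤ (2*C*R^2) * (((n:ℝ)+1)^(p+1) * c n * R^(2*n)) := by
    intro n y hy
    have hc := c_pos n
    have hyR : |y| ≤ R := by
      rw [Metric.mem_ball, dist_zero_right, Real.norm_eq_abs] at hy; linarith
    rw [norm_mul, Real.norm_eq_abs, Real.norm_eq_abs, abs_pow, db, abs_mul, Nat.abs_cast]
    have h1 : |y| ^ (de e n) ≤ R ^ (2*n+2) :=
      le_trans (pow_le_pow_left₀ (abs_nonneg y) hyR _)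
        (pow_le_pow_right₀ hR1 (le_trans (Nat.sub_le _ _) (he n)))
    have hen : ((e n : ℝ)) ≤ 2*((n:ℝ)+1) := by exact_mod_cast Nat.cast_le.mpr (he n)
    calc |b n| * (e n : ℝ) * |y| ^ (de e n)
        ≤ (C * ((n:ℝ)+1)^p * c n * (2*((n:ℝ)+1))) * (R^(2*n) * R^2) := by
          apply mul_le_mul
          · exact mul_le_mul (hb n) hen (Nat.cast_nonneg _) (by positivity)
          · rw [← pow_add]; exact h1
          · positivity
          · positivity
      _ = (2*C*R^2) * (((n:ℝ)+1)^(p+1) * c n * R^(2*n)) := by ring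
  exact hasDerivAt_tsum_of_isPreconnected
    (((summable_main (p+1) R).mul_left (2*C*R^2))) Metric.isOpen_ball
    (convex_ball (0:ℝ) R).isPreconnected hder hbound hxR hsum hxR

end BesselAux
namespace BesselAux

def eI : ℕ → ℕ := fun n => 2*n
noncomputable def bS : ℕ → ℝ := fun n => harmonicPhi n * c n

lemma phi_zero : harmonicPhi 0 = 0 := by simp [harmonicPhi]
lemma phi_succ (n : ℕ) : harmonicPhi (n+1) = harmonicPhi n + 1/((n:ℝ)+1) := by
  rw [harmonicPhi, harmonicPhi, Finset.sum_range_succ]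
lemma phi_nonneg (n : ℕ) : 0 ≤ harmonicPhi n := by
  apply Finset.sum_nonneg; intro m _; positivity
lemma phi_le (n : ℕ) : harmonicPhi n ≤ (n:ℝ) := by
  calc harmonicPhi n ≤ ∑ m ∈ Finset.range n, (1:ℝ) := by
        apply Finset.sum_le_sum; intro m _
        rw [div_le_one (by positivity)]; linarith [Nat.cast_nonneg (α := ℝ) m]
    _ = n := by simp

lemma c_zero : c 0 = 1 := by norm_num [c]

lemma good_I : Good c eI 1 0 := by
  refine ⟨zero_le_one, fun n => ?_, fun n => by simp only [eI]; omega⟩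
  rw [abs_of_pos (c_pos n)]; simp

lemma good_S : Good bS eI 1 1 := by
  refine ⟨zero_le_one, fun n => ?_, fun n => by simp only [eI]; omega⟩
  rw [bS, abs_mul, abs_of_nonneg (phi_nonneg n), abs_of_pos (c_pos n), one_mul]
  exact mul_le_mul_of_nonneg_right
    (le_trans (phi_le n) (by rw [pow_one]; linarith)) (c_pos n).le

noncomputable def I0 : ℝ → ℝ := T c eI
noncomputable def I0d : ℝ → ℝ := T (db c eI) (de eI)
noncomputable def I0dd : ℝ → ℝ := T (db (db c eI) (de eI)) (de (de eI))
noncomputable def S0 : ℝ → ℝ := T bS eI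
noncomputable def S0d : ℝ → ℝ := T (db bS eI) (de eI)
noncomputable def S0dd : ℝ → ℝ := T (db (db bS eI) (de eI)) (de (de eI))

lemma hasDerivAt_I0 (x : ℝ) : HasDerivAt I0 (I0d x) x := good_I.hasDerivAt x
lemma hasDerivAt_I0d (x : ℝ) : HasDerivAt I0d (I0dd x) x := good_I.deriv.hasDerivAt x
lemma hasDerivAt_S0 (x : ℝ) : HasDerivAt S0 (S0d x) x := good_S.hasDerivAt x
lemma hasDerivAt_S0d (x : ℝ) : HasDerivAt S0d (S0dd x) x := good_S.deriv.hasDerivAt x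

lemma de_eI_succ (m : ℕ) : de eI (m+1) = 2*m+1 := by simp [de, eI]; omega
lemma dde_eI_succ (m : ℕ) : de (de eI) (m+1) = 2*m := by simp [de, eI]; omega
lemma eI_succ (m : ℕ) : eI (m+1) = 2*m+2 := by simp only [eI]; omega

lemma I0_ode (x : ℝ) (hx : x ≠ 0) : I0dd x + I0d x / x = I0 x := by
  have hA := good_I.deriv.deriv.summable x
  have hB := good_I.deriv.summable x
  have step1 : I0dd x + I0d x / x
      = ∑' n, (db (db c eI) (de eI) n * x ^ (de (de eI) n)
          + (db c eI n * x ^ (de eI n)) / x) := by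
    rw [I0dd, I0d, T, T, ← tsum_div_const, ← Summable.tsum_add hA (hB.div_const x)]
  rw [step1, Summable.tsum_eq_zero_add (hA.add (hB.div_const x))]
  have h0 : db (db c eI) (de eI) 0 * x ^ (de (de eI) 0)
      + (db c eI 0 * x ^ (de eI 0)) / x = 0 := by
    simp [db, de, eI]
  rw [h0, zero_add, I0, T]
  apply tsum_congr
  intro m
  simp only [db, de_eI_succ, dde_eI_succ, eI_succ, eI]
  push_cast
  rw [c_succ m, pow_succ]
  field_simp
  ring

lemma S0_deriv_part (x : ℝ) (hx : x ≠ 0) : S0dd x + S0d x / x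
    = ∑' m : ℕ, harmonicPhi (m+1) * c m * x ^ (2*m) := by
  have hA := good_S.deriv.deriv.summable x
  have hB := good_S.deriv.summable x
  have step1 : S0dd x + S0d x / x
      = ∑' n, (db (db bS eI) (de eI) n * x ^ (de (de eI) n)
          + (db bS eI n * x ^ (de eI n)) / x) := by
    rw [S0dd, S0d, T, T, ← tsum_div_const, ← Summable.tsum_add hA (hB.div_const x)]
  rw [step1, Summable.tsum_eq_zero_add (hA.add (hB.div_const x))]
  have h0 : db (db bS eI) (de eI) 0 * x ^ (de (de eI) 0)
      + (db bS eI 0 * x ^ (de eI 0)) / x = 0 := by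
    simp [db, de, eI, bS]
  rw [h0, zero_add]
  apply tsum_congr
  intro m
  simp only [db, de_eI_succ, dde_eI_succ, eI_succ, bS]
  push_cast
  rw [c_succ m, pow_succ]
  field_simp
  ring

lemma good_Sshift : Good (fun m => harmonicPhi (m+1) * c m) eI 2 1 := by
  refine ⟨by norm_num, fun n => ?_, fun n => by simp only [eI]; omega⟩
  rw [abs_mul, abs_of_nonneg (phi_nonneg (n+1)), abs_of_pos (c_pos n)]
  apply mul_le_mul_of_nonneg_right _ (c_pos n).le
  calc harmonicPhi (n+1) ≤ ((n:ℝ)+1) := by exact_mod_cast phi_le (n+1)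
    _ ≤ 2*((n:ℝ)+1)^1 := by rw [pow_one]; linarith [Nat.cast_nonneg (α := ℝ) n]
    _ = 2*((n:ℝ)+1)^1 := rfl

lemma good_Ifrac : Good (fun m => c m / ((m:ℝ)+1)) eI 1 0 := by
  refine ⟨zero_le_one, fun n => ?_, fun n => by simp only [eI]; omega⟩
  show |c n / ((n:ℝ)+1)| ≤ 1 * ((n:ℝ)+1)^0 * c n
  rw [abs_of_pos (by have := c_pos n; positivity), pow_zero, one_mul, one_mul]
  exact div_le_self (c_pos n).le (by linarith [Nat.cast_nonneg (α := ℝ) n])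

lemma S0_ode (x : ℝ) (hx : x ≠ 0) :
    S0dd x + S0d x / x - S0 x = 2 * I0d x / x := by
  have h1 := good_Sshift.summable x
  simp only [eI] at h1
  have h2 := good_S.summable x
  have hsub : (∑' m : ℕ, harmonicPhi (m+1) * c m * x ^ (2*m))
      - ∑' n, bS n * x ^ eI n
      = ∑' m : ℕ, c m / ((m:ℝ)+1) * x ^ (2*m) := by
    rw [← Summable.tsum_sub h1 h2]
    apply tsum_congr
    intro m
    simp only [bS, eI, phi_succ]
    ring
  have hRHS : 2 * I0d x / x = ∑' m : ℕ, c m / ((m:ℝ)+1) * x ^ (2*m) := by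
    rw [I0d, T, ← tsum_mul_left, ← tsum_div_const]
    rw [Summable.tsum_eq_zero_add (((good_I.deriv.summable x).mul_left 2).div_const x)]
    have h0 : 2 * (db c eI 0 * x ^ de eI 0) / x = 0 := by simp [db, de, eI]
    rw [h0, zero_add]
    apply tsum_congr
    intro m
    have hm : ((m:ℝ)+1) ≠ 0 := by positivity
    simp only [db, de_eI_succ, eI_succ]
    push_cast
    rw [c_succ m]
    field_simp
    ring
  calc S0dd x + S0d x / x - S0 x
      = ∑' m : ℕ, c m / ((m:ℝ)+1) * x ^ (2*m) := by
        rw [S0_deriv_part x hx, S0, T]; exact hsub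
    _ = 2 * I0d x / x := hRHS.symm

end BesselAux
namespace BesselAux

noncomputable def Lg (x : ℝ) : ℝ := Real.log (x/2) + Real.eulerMascheroniConstant
noncomputable def K0 : ℝ → ℝ := fun x => -Lg x * I0 x + S0 x
noncomputable def K0d : ℝ → ℝ := fun x => -(1/x) * I0 x - Lg x * I0d x + S0d x
noncomputable def K0dd : ℝ → ℝ := fun x =>
  (1/x^2) * I0 x - (2/x) * I0d x - Lg x * I0dd x + S0dd x

lemma hasDerivAt_Lg (x : ℝ) (hx : 0 < x) : HasDerivAt Lg (1/x) x := by
  have h2 : x/2 ≠ 0 := by positivity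
  have h := (Real.hasDerivAt_log h2).comp x ((hasDerivAt_id x).div_const 2)
  have h' : HasDerivAt (fun y => Real.log (y/2)) (1/x) x := by
    refine h.congr_deriv (Eq.symm ?_)
    field_simp
  exact h'.add_const _

lemma hasDerivAt_K0 (x : ℝ) (hx : 0 < x) : HasDerivAt K0 (K0d x) x := by
  have h := (((hasDerivAt_Lg x hx).neg.mul (hasDerivAt_I0 x)).add (hasDerivAt_S0 x))
  refine h.congr_deriv (Eq.symm ?_)
  show K0d x = -(1/x) * I0 x + -Lg x * I0d x + S0d x
  simp only [K0d]; ring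

lemma hasDerivAt_K0d (x : ℝ) (hx : 0 < x) : HasDerivAt K0d (K0dd x) x := by
  have hx' : x ≠ 0 := hx.ne'
  have hinv : HasDerivAt (fun y : ℝ => -(1/y)) (1/x^2) x := by
    have := (hasDerivAt_inv hx').neg
    simp only [one_div]
    exact this.congr_deriv (neg_neg _)
  have h := ((hinv.mul (hasDerivAt_I0 x)).sub
      ((hasDerivAt_Lg x hx).mul (hasDerivAt_I0d x))).add (hasDerivAt_S0d x)
  refine h.congr_deriv (Eq.symm ?_)
  show K0dd x = (1/x^2) * I0 x + -(1/x) * I0d x - (1/x * I0d x + Lg x * I0dd x) + S0dd x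
  simp only [K0dd]; ring

lemma K0_ode (x : ℝ) (hx : 0 < x) : K0dd x + K0d x / x - K0 x = 0 := by
  have hI := I0_ode x hx.ne'
  have hS := S0_ode x hx.ne'
  simp only [K0dd, K0d, K0]
  linear_combination (-(Lg x)) * hI + hS

lemma I0_zero : I0 0 = 1 := by
  rw [I0, T, tsum_eq_single 0]
  · simp [eI, c_zero]
  · intro n hn
    rw [zero_pow (by simp only [eI]; omega), mul_zero]

lemma I0d_zero : I0d 0 = 0 := by
  rw [I0d, T]
  have : ∀ n : ℕ, db c eI n * (0:ℝ) ^ (de eI n) = 0 := by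
    intro n
    match n with
    | 0 => simp [db, de, eI]
    | m+1 => rw [de_eI_succ, zero_pow (by omega), mul_zero]
  simp only [this, tsum_zero]

lemma S0_zero : S0 0 = 0 := by
  rw [S0, T]
  have : ∀ n : ℕ, bS n * (0:ℝ) ^ (eI n) = 0 := by
    intro n
    match n with
    | 0 => simp [bS, phi_zero]
    | m+1 => rw [eI_succ, zero_pow (by omega), mul_zero]
  simp only [this, tsum_zero]

lemma S0d_zero : S0d 0 = 0 := by
  rw [S0d, T]
  have : ∀ n : ℕ, db bS eI n * (0:ℝ) ^ (de eI n) = 0 := by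
    intro n
    match n with
    | 0 => simp [db, de, eI]
    | m+1 => rw [de_eI_succ, zero_pow (by omega), mul_zero]
  simp only [this, tsum_zero]

/-- the (scaled) Wronskian -/
noncomputable def Wg : ℝ → ℝ := fun x => x * (I0 x * K0d x - I0d x * K0 x)

lemma hasDerivAt_Wg (x : ℝ) (hx : 0 < x) : HasDerivAt Wg 0 x := by
  have hx' : x ≠ 0 := hx.ne'
  have hIx : x * I0dd x = x * I0 x - I0d x := by
    have h := I0_ode x hx'
    field_simp at h
    linarith
  have hKx : x * K0dd x = x * K0 x - K0d x := by
    have h := K0_ode x hx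
    field_simp at h
    linarith
  have h := (hasDerivAt_id x).mul (((hasDerivAt_I0 x).mul (hasDerivAt_K0d x hx)).sub
    ((hasDerivAt_I0d x).mul (hasDerivAt_K0 x hx)))
  refine h.congr_deriv (Eq.symm ?_)
  show (0:ℝ) = 1 * (I0 x * K0d x - I0d x * K0 x)
      + x * (I0d x * K0d x + I0 x * K0dd x - (I0dd x * K0 x + I0d x * K0d x))
  linear_combination (K0 x) * hIx - (I0 x) * hKx

lemma Wg_const (x : ℝ) (hx : 0 < x) (y : ℝ) (hy : 0 < y) : Wg x = Wg y := by
  have key : ∀ a b : ℝ, 0 < a → a ≤ b → Wg b = Wg a := by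
    intro a b ha hab
    have hcont : ContinuousOn Wg (Set.Icc a b) := fun z hz =>
      ((hasDerivAt_Wg z (lt_of_lt_of_le ha hz.1)).continuousAt).continuousWithinAt
    have hderiv : ∀ z ∈ Set.Ico a b, HasDerivWithinAt Wg 0 (Set.Ici z) z := fun z hz =>
      (hasDerivAt_Wg z (lt_of_lt_of_le ha hz.1)).hasDerivWithinAt
    exact constant_of_has_deriv_right_zero hcont hderiv b (Set.right_mem_Icc.mpr hab)
  rcases le_total x y with h | h
  · rw [key x y hx h]
  · rw [key y x hy h]

end BesselAux
namespace BesselAux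

open Filter Topology

lemma tendsto_mul_Lg : Tendsto (fun y : ℝ => y * Lg y) (nhdsWithin 0 (Set.Ioi 0)) (nhds 0) := by
  have t1 : Tendsto (fun y : ℝ => Real.log y * y) (nhdsWithin 0 (Set.Ioi 0)) (nhds 0) := by
    have := tendsto_log_mul_rpow_nhdsGT_zero (r := 1) one_pos
    refine this.congr' ?_
    filter_upwards [self_mem_nhdsWithin] with y _
    rw [Real.rpow_one]
  have t2 : Tendsto (fun y : ℝ => y * (Real.eulerMascheroniConstant - Real.log 2))
      (nhdsWithin 0 (Set.Ioi 0)) (nhds 0) := by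
    have : Tendsto (fun y : ℝ => y * (Real.eulerMascheroniConstant - Real.log 2))
        (nhds 0) (nhds (0 * (Real.eulerMascheroniConstant - Real.log 2))) :=
      (continuous_id.mul continuous_const).tendsto 0
    rw [zero_mul] at this
    exact this.mono_left nhdsWithin_le_nhds
  have := t1.add t2
  rw [add_zero] at this
  refine this.congr' ?_
  filter_upwards [self_mem_nhdsWithin] with y hy
  have hy' : (0:ℝ) < y := hy
  rw [Lg, Real.log_div hy'.ne' (by norm_num)]
  ring

lemma tendsto_I0 : Tendsto I0 (nhdsWithin 0 (Set.Ioi 0)) (nhds 1) := by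
  have := (hasDerivAt_I0 0).continuousAt.tendsto
  rw [I0_zero] at this
  exact this.mono_left nhdsWithin_le_nhds

lemma tendsto_I0d : Tendsto I0d (nhdsWithin 0 (Set.Ioi 0)) (nhds 0) := by
  have := (hasDerivAt_I0d 0).continuousAt.tendsto
  rw [I0d_zero] at this
  exact this.mono_left nhdsWithin_le_nhds

lemma tendsto_S0 : Tendsto S0 (nhdsWithin 0 (Set.Ioi 0)) (nhds 0) := by
  have := (hasDerivAt_S0 0).continuousAt.tendsto
  rw [S0_zero] at this
  exact this.mono_left nhdsWithin_le_nhds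

lemma tendsto_S0d : Tendsto S0d (nhdsWithin 0 (Set.Ioi 0)) (nhds 0) := by
  have := (hasDerivAt_S0d 0).continuousAt.tendsto
  rw [S0d_zero] at this
  exact this.mono_left nhdsWithin_le_nhds

lemma tendsto_id0 : Tendsto (fun y : ℝ => y) (nhdsWithin 0 (Set.Ioi 0)) (nhds 0) :=
  tendsto_id.mono_left nhdsWithin_le_nhds

lemma tendsto_Wg : Tendsto Wg (nhdsWithin 0 (Set.Ioi 0)) (nhds (-1)) := by
  have big : Tendsto (fun y : ℝ =>
      I0 y * (-I0 y - (y * Lg y) * I0d y + y * S0d y)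
      - I0d y * (-(y * Lg y) * I0 y + y * S0 y))
      (nhdsWithin 0 (Set.Ioi 0)) (nhds ((1:ℝ) * (-1 - 0*0 + 0*0) - 0 * (-0*1 + 0*0))) := by
    refine Tendsto.sub ?_ ?_
    · exact tendsto_I0.mul (((tendsto_I0.neg.sub (tendsto_mul_Lg.mul tendsto_I0d)).add
        (tendsto_id0.mul tendsto_S0d)))
    · exact tendsto_I0d.mul (((tendsto_mul_Lg.neg.mul tendsto_I0).add
        (tendsto_id0.mul tendsto_S0)))
  norm_num at big
  refine big.congr' ?_
  filter_upwards [self_mem_nhdsWithin] with y hy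
  have hy' : (0:ℝ) < y := hy
  have hyne : y ≠ 0 := hy'.ne'
  rw [Wg, K0d, K0]
  field_simp

lemma Wg_eq (x : ℝ) (hx : 0 < x) : Wg x = -1 := by
  have hconst : ∀ᶠ y in nhdsWithin (0:ℝ) (Set.Ioi 0), Wg x = Wg y := by
    filter_upwards [self_mem_nhdsWithin] with y hy
    exact (Wg_const x hx y hy)
  have : Tendsto Wg (nhdsWithin 0 (Set.Ioi 0)) (nhds (Wg x)) :=
    Tendsto.congr' hconst tendsto_const_nhds
  exact tendsto_nhds_unique this tendsto_Wg

end BesselAux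
namespace BesselAux

open Set

lemma ode_unique (lam : ℝ) (y yd : ℝ → ℝ)
    (hy : ∀ u : ℝ, 0 < u → HasDerivAt y (yd u) u)
    (hyd : ∀ u : ℝ, 0 < u → HasDerivAt yd (-(yd u) / u - lam * y u) u)
    (h1 : y 1 = 0) (h1' : yd 1 = 0) : ∀ u : ℝ, 0 < u → y u = 0 := by
  intro u hu
  set a : ℝ := min u 1 / 2 with ha_def
  have ha : 0 < a := by positivity
  have hau : a < u := by
    have : min u 1 ≤ u := min_le_left _ _
    rw [ha_def]; linarith
  have ha1 : a < 1 := by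
    have : min u 1 ≤ 1 := min_le_right _ _
    rw [ha_def]; linarith
  set b : ℝ := max u 1 + 1 with hb_def
  have hub : u < b := by
    have : u ≤ max u 1 := le_max_left _ _
    rw [hb_def]; linarith
  have h1b : (1:ℝ) < b := by
    have : (1:ℝ) ≤ max u 1 := le_max_right _ _
    rw [hb_def]; linarith
  set v : ℝ → ℝ × ℝ → ℝ × ℝ := fun t p => (p.2, -(p.2) / max t a - lam * p.1) with hv_def
  set Kr : ℝ := max 1 (1/a + |lam|) with hKr_def
  have hKr0 : 0 ≤ Kr := le_trans zero_le_one (le_max_left _ _)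
  have hKr1 : 1 ≤ Kr := le_max_left _ _
  have hKr2 : 1/a + |lam| ≤ Kr := le_max_right _ _
  set K : NNReal := Real.toNNReal Kr with hK_def
  have hKcoe : (K : ℝ) = Kr := Real.coe_toNNReal _ hKr0
  have hv : ∀ t, LipschitzWith K (v t) := by
    intro t
    apply LipschitzWith.of_dist_le_mul
    intro p q
    rw [hKcoe, Prod.dist_eq, Prod.dist_eq]
    simp only [hv_def, Real.dist_eq]
    set M := max t a with hM_def
    have hMa : a ≤ M := le_max_right _ _
    have hM0 : 0 < M := lt_of_lt_of_le ha hMa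
    set D := max |p.1 - q.1| |p.2 - q.2| with hD_def
    have hD1 : |p.1 - q.1| ≤ D := le_max_left _ _
    have hD2 : |p.2 - q.2| ≤ D := le_max_right _ _
    have hD0 : 0 ≤ D := le_trans (abs_nonneg _) hD1
    apply max_le
    · calc |p.2 - q.2| ≤ D := hD2
        _ = 1 * D := (one_mul D).symm
        _ ≤ Kr * D := by nlinarith
    · have e1 : -p.2 / M - lam * p.1 - (-q.2 / M - lam * q.1)
          = -((p.2 - q.2)/M) - lam * (p.1 - q.1) := by ring
      rw [e1]
      calc |(-((p.2 - q.2)/M)) - lam * (p.1 - q.1)|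
          ≤ |(p.2 - q.2)/M| + |lam * (p.1 - q.1)| := by
            rw [sub_eq_add_neg]
            refine le_trans (abs_add_le _ _) ?_
            rw [abs_neg, abs_neg]
        _ = |p.2 - q.2|/M + |lam| * |p.1 - q.1| := by
            rw [abs_div, abs_mul, abs_of_pos hM0]
        _ ≤ |p.2 - q.2|/a + |lam| * |p.1 - q.1| := by
            have := div_le_div_of_nonneg_left (abs_nonneg (p.2 - q.2)) ha hMa
            linarith
        _ ≤ (1/a) * D + |lam| * D := by
            have h1' : |p.2 - q.2|/a ≤ (1/a) * D := by
              rw [one_div, inv_mul_eq_div]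
              exact (div_le_div_iff_of_pos_right ha).mpr hD2
            have h2' : |lam| * |p.1 - q.1| ≤ |lam| * D :=
              mul_le_mul_of_nonneg_left hD1 (abs_nonneg lam)
            linarith
        _ = (1/a + |lam|) * D := by ring
        _ ≤ Kr * D := mul_le_mul_of_nonneg_right hKr2 hD0
  -- apply uniqueness
  have key := ODE_solution_unique_of_mem_Icc (v := v) (s := fun _ => (univ : Set (ℝ × ℝ)))
    (K := K) (fun t _ => (hv t).lipschitzOnWith)
    (t₀ := 1) (a := a) (b := b) (f := fun t => (y t, yd t)) (g := fun _ => ((0:ℝ), (0:ℝ)))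
    ⟨ha1, h1b⟩
    ?_ ?_ (fun _ _ => trivial) ?_ ?_ (fun _ _ => trivial) ?_
  · have := key ⟨le_of_lt hau, le_of_lt hub⟩
    exact congrArg Prod.fst this
  · -- continuity of γ
    intro t ht
    have ht0 : 0 < t := lt_of_lt_of_le ha ht.1
    exact ((hy t ht0).continuousAt.prodMk (hyd t ht0).continuousAt).continuousWithinAt
  · -- derivative of γ
    intro t ht
    have ht0 : 0 < t := lt_trans ha ht.1
    have := (hy t ht0).prodMk (hyd t ht0)
    refine this.congr_deriv (Eq.symm ?_)
    simp only [hv_def]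
    rw [max_eq_left (le_of_lt ht.1)]
  · exact continuousOn_const
  · intro t ht
    have : v t ((0:ℝ), (0:ℝ)) = ((0:ℝ), (0:ℝ)) := by
      simp [hv_def]
    rw [this]
    exact hasDerivAt_const t _
  · exact Prod.ext h1 h1'

end BesselAux
namespace BesselAux

lemma besselI0_eq (x : ℝ) : besselI0 x = I0 x := by
  rw [besselI0, I0, T]
  apply tsum_congr
  intro n
  show x ^ (2*n) / (2^(2*n) * (n.factorial:ℝ)^2) = c n * x ^ (eI n)
  rw [c, div_eq_mul_inv, mul_comm]
  rfl

lemma besselK0_eq (x : ℝ) : besselK0 x = K0 x := by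
  rw [besselK0, K0, Lg, besselI0_eq]
  congr 1
  rw [S0, T]
  apply tsum_congr
  intro n
  show harmonicPhi n * x ^ (2*n) / (2^(2*n) * (n.factorial:ℝ)^2) = bS n * x ^ (eI n)
  rw [bS, c, div_eq_mul_inv]
  show harmonicPhi n * x ^ (2*n) * _ = harmonicPhi n * c n * x ^ (2*n)
  rw [c]; ring

lemma scaled_ode {g gd gdd : ℝ → ℝ} (k u : ℝ) (hk : 0 < k) (hu : 0 < u)
    (h : gdd (k*u) + gd (k*u) / (k*u) - g (k*u) = 0) :
    k^2 * gdd (k*u) + (k * gd (k*u)) / u + (-(k^2)) * g (k*u) = 0 := by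
  have hu' : u ≠ 0 := hu.ne'
  have hk' : k ≠ 0 := hk.ne'
  have h3 : k^2 * (gd (k*u) / (k*u)) = k * gd (k*u) / u := by
    field_simp
  linear_combination k^2 * h - h3

lemma hasDerivAt_comp_mul {g gd : ℝ → ℝ} (k u : ℝ)
    (h : HasDerivAt g (gd (k*u)) (k*u)) :
    HasDerivAt (fun w => g (k*w)) (k * gd (k*u)) u := by
  have hin : HasDerivAt (fun w : ℝ => k * w) k u := by
    simpa using (hasDerivAt_id u).const_mul k
  have := h.comp u hin
  refine this.congr_deriv (Eq.symm ?_)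
  ring

end BesselAux

open BesselAux in
theorem bessel_ode_solution_neg'
    (lam : ℝ) (hlam : lam < 0) (f : ℝ → ℝ)
    (hf : ∀ u ∈ Set.Ioi (0 : ℝ), DifferentiableAt ℝ f u)
    (hf' : ∀ u ∈ Set.Ioi (0 : ℝ), DifferentiableAt ℝ (deriv f) u) :
    (∀ u ∈ Set.Ioi (0 : ℝ), deriv (deriv f) u + deriv f u / u + lam * f u = 0) ↔
    (∃ c₁ c₂ : ℝ, ∀ u ∈ Set.Ioi (0 : ℝ),
      f u = c₁ * besselI0 (Real.sqrt (-lam) * u) + c₂ * besselK0 (Real.sqrt (-lam) * u)) := by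
  set k : ℝ := Real.sqrt (-lam) with hk_def
  have hk : 0 < k := Real.sqrt_pos.mpr (by linarith)
  have hk2 : k^2 = -lam := Real.sq_sqrt (by linarith)
  have hlamk : lam = -(k^2) := by linarith
  have hk' : k ≠ 0 := hk.ne'
  -- derivative facts for the building blocks, composed with k * ·
  have hIc : ∀ u : ℝ, HasDerivAt (fun w => I0 (k*w)) (k * I0d (k*u)) u :=
    fun u => hasDerivAt_comp_mul k u (hasDerivAt_I0 (k*u))
  have hIdc : ∀ u : ℝ, HasDerivAt (fun w => I0d (k*w)) (k * I0dd (k*u)) u :=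
    fun u => hasDerivAt_comp_mul k u (hasDerivAt_I0d (k*u))
  have hKc : ∀ u : ℝ, 0 < u → HasDerivAt (fun w => K0 (k*w)) (k * K0d (k*u)) u :=
    fun u hu => hasDerivAt_comp_mul k u (hasDerivAt_K0 (k*u) (by positivity))
  have hKdc : ∀ u : ℝ, 0 < u → HasDerivAt (fun w => K0d (k*w)) (k * K0dd (k*u)) u :=
    fun u hu => hasDerivAt_comp_mul k u (hasDerivAt_K0d (k*u) (by positivity))
  have hIode : ∀ u : ℝ, 0 < u →
      k^2 * I0dd (k*u) + (k * I0d (k*u)) / u + (-(k^2)) * I0 (k*u) = 0 := by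
    intro u hu
    exact scaled_ode k u hk hu (by
      have := I0_ode (k*u) (by positivity)
      linarith)
  have hKode : ∀ u : ℝ, 0 < u →
      k^2 * K0dd (k*u) + (k * K0d (k*u)) / u + (-(k^2)) * K0 (k*u) = 0 := by
    intro u hu
    exact scaled_ode k u hk hu (K0_ode (k*u) (by positivity))
  constructor
  · -- forward: solution implies Bessel combination
    intro hode
    set fd : ℝ → ℝ := deriv f with hfd_def
    have hfd : ∀ u : ℝ, 0 < u → HasDerivAt f (fd u) u :=
      fun u hu => (hf u hu).hasDerivAt
    have hfdd : ∀ u : ℝ, 0 < u → HasDerivAt fd (deriv fd u) u :=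
      fun u hu => (hf' u hu).hasDerivAt
    have hode' : ∀ u : ℝ, 0 < u → deriv fd u = -(fd u)/u - lam * f u := by
      intro u hu
      have := hode u hu
      rw [hfd_def]
      field_simp at this ⊢
      linarith
    have hW : I0 k * (k * K0d k) - (k * I0d k) * K0 k = -1 := by
      have := Wg_eq k hk
      rw [Wg] at this
      linear_combination this
    set c₁ : ℝ := -(f 1 * (k * K0d k) - fd 1 * K0 k) with hc1_def
    set c₂ : ℝ := -(I0 k * fd 1 - (k * I0d k) * f 1) with hc2_def
    have heq1 : c₁ * I0 k + c₂ * K0 k = f 1 := by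
      rw [hc1_def, hc2_def]
      linear_combination (-(f 1)) * hW
    have heq2 : c₁ * (k * I0d k) + c₂ * (k * K0d k) = fd 1 := by
      rw [hc1_def, hc2_def]
      linear_combination (-(fd 1)) * hW
    refine ⟨c₁, c₂, ?_⟩
    intro u hu
    have hu' : (0:ℝ) < u := hu
    set y : ℝ → ℝ := fun w => f w - (c₁ * I0 (k*w) + c₂ * K0 (k*w)) with hy_def
    set yd : ℝ → ℝ := fun w => fd w - (c₁ * (k * I0d (k*w)) + c₂ * (k * K0d (k*w))) with hyd_def
    have hy : ∀ w : ℝ, 0 < w → HasDerivAt y (yd w) w := by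
      intro w hw
      exact (hfd w hw).sub (((hIc w).const_mul c₁).add ((hKc w hw).const_mul c₂))
    have hyd : ∀ w : ℝ, 0 < w → HasDerivAt yd (-(yd w) / w - lam * y w) w := by
      intro w hw
      have h := (hfdd w hw).sub
        ((((hIdc w).const_mul k).const_mul c₁).add (((hKdc w hw).const_mul k).const_mul c₂))
      refine h.congr_deriv (Eq.symm ?_)
      rw [hy_def, hyd_def, hode' w hw]
      have hI := hIode w hw
      have hK := hKode w hw
      rw [hlamk]
      field_simp at hI hK ⊢
      linear_combination c₁ * hI + c₂ * hK
    have hy1 : y 1 = 0 := by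
      rw [hy_def]
      simp only [mul_one]
      linarith [heq1]
    have hyd1 : yd 1 = 0 := by
      rw [hyd_def]
      simp only [mul_one]
      linarith [heq2]
    have h0 : f u - (c₁ * I0 (k*u) + c₂ * K0 (k*u)) = 0 :=
      ode_unique lam y yd hy hyd hy1 hyd1 u hu'
    rw [besselI0_eq, besselK0_eq]
    linarith
  · -- backward: Bessel combination solves the ODE
    rintro ⟨c₁, c₂, hc⟩
    intro u hu
    have hu' : (0:ℝ) < u := hu
    set N : ℝ → ℝ := fun w => c₁ * I0 (k*w) + c₂ * K0 (k*w) with hN_def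
    set Nd : ℝ → ℝ := fun w => c₁ * (k * I0d (k*w)) + c₂ * (k * K0d (k*w)) with hNd_def
    have hNder : ∀ w : ℝ, 0 < w → HasDerivAt N (Nd w) w := by
      intro w hw
      exact ((hIc w).const_mul c₁).add ((hKc w hw).const_mul c₂)
    have hNdder : ∀ w : ℝ, 0 < w → HasDerivAt Nd
        (c₁ * (k^2 * I0dd (k*w)) + c₂ * (k^2 * K0dd (k*w))) w := by
      intro w hw
      have h := (((hIdc w).const_mul k).const_mul c₁).add
        (((hKdc w hw).const_mul k).const_mul c₂)
      refine h.congr_deriv (Eq.symm ?_)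
      ring
    have hev : f =ᶠ[nhds u] N := by
      filter_upwards [isOpen_Ioi.mem_nhds hu] with w hw
      rw [hc w hw, hN_def, besselI0_eq, besselK0_eq]
    have hd1 : deriv f u = Nd u := by
      rw [hev.deriv_eq]
      exact (hNder u hu').deriv
    have hd2 : deriv (deriv f) u
        = c₁ * (k^2 * I0dd (k*u)) + c₂ * (k^2 * K0dd (k*u)) := by
      have hev2 : deriv f =ᶠ[nhds u] Nd := by
        refine (hev.deriv).trans ?_
        filter_upwards [isOpen_Ioi.mem_nhds hu] with w hw
        exact (hNder w hw).deriv
      rw [hev2.deriv_eq]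
      exact (hNdder u hu').deriv
    have hfu : f u = N u := by
      rw [hc u hu, hN_def, besselI0_eq, besselK0_eq]
    rw [hd1, hd2, hfu]
    simp only [hN_def, hNd_def]
    rw [hlamk]
    linear_combination c₁ * hIode u hu' + c₂ * hKode u hu'

/-- For `λ < 0` and `f` twice differentiable on `(0,∞)`:
`f'' + f'/u + λ f = 0` on `(0,∞)` iff `f(u) = c₁ I₀(√(−λ) u) + c₂ K₀(√(−λ) u)` on
`(0,∞)` for some constants `c₁, c₂`. -/
theorem bessel_ode_solution_neg
    (lam : ℝ) (hlam : lam < 0) (f : ℝ → ℝ)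
    (hf : ∀ u ∈ Set.Ioi (0 : ℝ), DifferentiableAt ℝ f u)
    (hf' : ∀ u ∈ Set.Ioi (0 : ℝ), DifferentiableAt ℝ (deriv f) u) :
    (∀ u ∈ Set.Ioi (0 : ℝ), deriv (deriv f) u + deriv f u / u + lam * f u = 0) ↔
    (∃ c₁ c₂ : ℝ, ∀ u ∈ Set.Ioi (0 : ℝ),
      f u = c₁ * besselI0 (Real.sqrt (-lam) * u) + c₂ * besselK0 (Real.sqrt (-lam) * u)) := by
  exact bessel_ode_solution_neg' lam hlam f hf hf'
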